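/- Let T_m denote the number of game walks of length m. Then T_1 = 1, and for every m ≥ 2, T_m = Σ_{k ≥ 4} Σ_{(m_1,…,m_k)} T_{m_1} · T_{m_2} · ⋯ · T_{m_k}, where the inner sum ranges over all compositions of m − 1 into k positive parts, i.e., all k-tuples (m_1,…,m_k) of positive integers with m_1 + ⋯ + m_k = m − 1 (only finitely many summands are nonzero). -/

import Mathlib

/-- A game walk: a finite sequence of integers each equal to `1` or at most
`-3`, all of whose partial sums are at least `1`, and whose total sum is `1`. -/
def IsGameWalk (D : List ℤ) : Prop :=
  (∀ d ∈ D, d = 1 ∨ d ≤ -3) ∧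
  (∀ k, 1 ≤ k → k ≤ D.length → 1 ≤ (D.take k).sum) ∧
  D.sum = 1

/-- `T m` is the number of game walks of length `m`. -/
noncomputable def T (m : ℕ) : ℕ :=
  Nat.card {D : List ℤ // D.length = m ∧ IsGameWalk D}


namespace GWaux

lemma walk_ne_nil {W : List ℤ} (h : IsGameWalk W) : W ≠ [] := by
  intro e; subst e; simpa using h.2.2

lemma walk_length_pos {W : List ℤ} (h : IsGameWalk W) : 0 < W.length :=
  List.length_pos_iff.mpr (walk_ne_nil h)

lemma sum_flatten {L : List (List ℤ)} (h : ∀ W ∈ L, IsGameWalk W) :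
    L.flatten.sum = L.length := by
  induction L with
  | nil => simp
  | cons W rest ih =>
    simp only [List.flatten_cons, List.sum_append, List.length_cons]
    rw [(h W (by simp)).2.2, ih (fun W hW => h W (by simp [hW]))]
    push_cast; ring

/-- partial sums of a flatten of game walks are at least 1 -/
lemma flatten_partial_ge_one {L : List (List ℤ)} (h : ∀ W ∈ L, IsGameWalk W) :
    ∀ p, 1 ≤ p → p ≤ L.flatten.length → 1 ≤ (L.flatten.take p).sum := by
  induction L with
  | nil => intro p h1 h2; simp at h2; omega
  | cons W rest ih =>
    intro p h1 h2
    simp only [List.flatten_cons] at *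
    rcases le_or_gt p W.length with hp | hp
    · rw [List.take_append_of_le_length hp]
      exact (h W (by simp)).2.1 p h1 hp
    · obtain ⟨q, rfl⟩ : ∃ q, p = W.length + q := ⟨p - W.length, by omega⟩
      rw [List.take_length_add_append, List.sum_append, (h W (by simp)).2.2]
      have hq : q ≤ rest.flatten.length := by
        simp only [List.length_append] at h2; omega
      rcases Nat.eq_zero_or_pos q with rfl | hq1
      · simp
      · have := ih (fun W hW => h W (by simp [hW])) q hq1 hq
        omega

/-- strictly past the first walk, partial sums are at least 2 -/
lemma flatten_partial_ge_two {W : List ℤ} {rest : List (List ℤ)}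
    (h : ∀ V ∈ W :: rest, IsGameWalk V)
    {p : ℕ} (hp : W.length < p) (hp2 : p ≤ (W :: rest).flatten.length) :
    2 ≤ (((W :: rest).flatten).take p).sum := by
  obtain ⟨q, rfl⟩ : ∃ q, p = W.length + q := ⟨p - W.length, by omega⟩
  simp only [List.flatten_cons] at *
  rw [List.take_length_add_append, List.sum_append, (h W (by simp)).2.2]
  have hq : q ≤ rest.flatten.length := by
    simp only [List.length_append] at hp2; omega
  have := flatten_partial_ge_one (fun V hV => h V (by simp [hV])) q (by omega) hq
  omega

/-- uniqueness of decompositions into game walks -/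
lemma decomp_unique : ∀ (L L' : List (List ℤ)), (∀ W ∈ L, IsGameWalk W) →
    (∀ W ∈ L', IsGameWalk W) → L.flatten = L'.flatten → L = L' := by
  intro L
  induction L with
  | nil =>
    intro L' _ h' hj
    cases L' with
    | nil => rfl
    | cons W rest =>
      exfalso
      have : W ≠ [] := walk_ne_nil (h' W (by simp))
      simp only [List.flatten_nil] at hj
      have := congrArg List.length hj
      simp only [List.length_nil, List.flatten_cons, List.length_append] at this
      have : 0 < W.length := List.length_pos_iff.mpr ‹W ≠ []›
      omega
  | cons W rest ih =>
    intro L' h h' hj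
    cases L' with
    | nil =>
      exfalso
      have : 0 < W.length := walk_length_pos (h W (by simp))
      have := congrArg List.length hj
      simp only [List.flatten_cons, List.length_append, List.flatten_nil,
        List.length_nil] at this
      omega
    | cons W' rest' =>
      -- both W.length and W'.length equal findGreatest of partial sum ≤ 1
      set P := (W :: rest).flatten with hP
      have key : ∀ (V : List ℤ) (r : List (List ℤ)), (∀ U ∈ V :: r, IsGameWalk U) →
          (V :: r).flatten = P →
          Nat.findGreatest (fun p => (P.take p).sum ≤ 1) P.length = V.length := by
        intro V r hVr hflat
        rw [Nat.findGreatest_eq_iff]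
        refine ⟨?_, ?_, ?_⟩
        · rw [← hflat]; simp [List.flatten_cons]
        · intro _
          rw [← hflat, List.flatten_cons, List.take_append_of_le_length le_rfl,
            List.take_length, (hVr V (by simp)).2.2]
        · intro q hq1 hq2 hq3
          rw [← hflat] at hq3
          have := flatten_partial_ge_two hVr hq1 (by rw [hflat]; exact hq2)
          omega
      have e1 := key W rest h rfl
      have e2 := key W' rest' h' hj.symm
      have elen : W.length = W'.length := by rw [← e1, e2]
      have eW : W = W' := by
        have : P.take W.length = W ∧ P.take W'.length = W' := by
          constructor
          · simp [hP, List.flatten_cons, List.take_append_of_le_length le_rfl]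
          · rw [hj]
            simp [List.flatten_cons, List.take_append_of_le_length le_rfl]
        rw [← this.1, ← this.2, elen]
      have erest : rest.flatten = rest'.flatten := by
        have h1 : P.drop W.length = rest.flatten := by
          simp [hP, List.flatten_cons]
        have h2 : P.drop W'.length = rest'.flatten := by
          rw [hj]; simp [List.flatten_cons]
        rw [← h1, ← h2, elen]
      rw [eW, ih rest' (fun U hU => h U (by simp [hU]))
        (fun U hU => h' U (by simp [hU])) erest]

end GWaux

namespace GWaux

lemma decomp_exists : ∀ k : ℕ, 1 ≤ k → ∀ P : List ℤ,
    (∀ d ∈ P, d = 1 ∨ d ≤ -3) →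
    (∀ t, 1 ≤ t → t ≤ P.length → 1 ≤ (P.take t).sum) →
    P.sum = k →
    ∃ L : List (List ℤ), L.length = k ∧ (∀ W ∈ L, IsGameWalk W) ∧ L.flatten = P := by
  intro k hk
  induction k, hk using Nat.le_induction with
  | base =>
    intro P h1 h2 h3
    exact ⟨[P], by simp, by simpa using ⟨h1, h2, by simpa using h3⟩, by simp⟩
  | succ k hk ih =>
    intro P h1 h2 h3
    have hPne : P ≠ [] := by
      intro e; rw [e] at h3; simp at h3; omega
    have hPlen : 1 ≤ P.length := List.length_pos_iff.mpr hPne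
    -- witness: partial sum at 1 equals 1 ≤ k
    have hw : (P.take 1).sum ≤ (k : ℤ) := by
      have e0 : (P.take 1).sum = P[0]'(by omega) := by
        have := List.sum_take_succ P 0 (by omega)
        simpa using this
      have hmem : P[0]'(by omega) ∈ P := List.getElem_mem _
      have h11 := h2 1 le_rfl hPlen
      rcases h1 _ hmem with h | h
      · rw [e0, h]; exact_mod_cast hk
      · rw [e0] at h11 ⊢; omega
    set t := Nat.findGreatest (fun t => (P.take t).sum ≤ (k : ℤ)) P.length with hdef
    have ht1 : 1 ≤ t := Nat.le_findGreatest hPlen hw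
    have htle : t ≤ P.length := Nat.findGreatest_le _
    have htP : (P.take t).sum ≤ (k : ℤ) := by
      rw [hdef]
      exact Nat.findGreatest_spec (P := fun t => (P.take t).sum ≤ (k : ℤ)) hPlen hw
    have hgt : ∀ q, t < q → q ≤ P.length → (k : ℤ) + 1 ≤ (P.take q).sum := by
      intro q hq1 hq2
      have := Nat.findGreatest_is_greatest (n := P.length)
        (P := fun t => (P.take t).sum ≤ (k : ℤ)) (hdef ▸ hq1) hq2
      omega
    have tlt : t < P.length := by
      rcases lt_or_eq_of_le htle with h | h
      · exact h
      · exfalso; rw [h, List.take_length, h3] at htP; push_cast at htP; omega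
    -- the value at t is k
    have hSt : (P.take t).sum = (k : ℤ) := by
      have hstep := List.sum_take_succ P t tlt
      have hmem : P[t]'tlt ∈ P := List.getElem_mem _
      have hnext := hgt (t + 1) (by omega) (by omega)
      rcases h1 _ hmem with h | h
      · omega
      · omega
    set A := P.take t with hA
    set Wl := P.drop t with hW
    have hAlen : A.length = t := by simp [hA]; omega
    have hAW : A ++ Wl = P := List.take_append_drop t P
    have hWlen : Wl.length = P.length - t := by simp [hW]
    have hWsum : Wl.sum = 1 := by
      have := congrArg List.sum hAW
      rw [List.sum_append, hSt, h3] at this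
      push_cast at this; omega
    -- A satisfies the hypotheses with sum k
    obtain ⟨L₀, hL₀len, hL₀walk, hL₀flat⟩ := ih A
      (fun d hd => h1 d (List.take_subset _ _ hd))
      (by
        intro s hs1 hs2
        rw [hAlen] at hs2
        have : A.take s = P.take s := by
          rw [hA, List.take_take]; congr 1; omega
        rw [this]
        exact h2 s hs1 (by omega))
      hSt
    refine ⟨L₀ ++ [Wl], by simp [hL₀len], ?_, by simp [hL₀flat, hAW]⟩
    intro W hWmem
    rw [List.mem_append] at hWmem
    rcases hWmem with h | h
    · exact hL₀walk W h
    · simp only [List.mem_singleton] at h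
      subst h
      refine ⟨fun d hd => h1 d (List.drop_subset _ _ hd), ?_, hWsum⟩
      intro s hs1 hs2
      have hts : t + s ≤ P.length := by omega
      have htake : P.take (t + s) = A ++ Wl.take s := by
        conv_lhs => rw [← hAW]
        rw [← hAlen, List.take_length_add_append]
      have := hgt (t + s) (by omega) hts
      rw [htake, List.sum_append, hSt] at this
      omega

end GWaux

namespace GWaux

/-- every entry of a game walk of length `m` lies in `[2 - m, 1]` -/
lemma entry_bound {D : List ℤ} {m : ℕ} (hlen : D.length = m) (hw : IsGameWalk D)
    {i : ℕ} (hi : i < m) : D[i]'(by omega) ∈ Set.Icc (2 - (m : ℤ)) 1 := by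
  have hi' : i < D.length := by omega
  have hmem : D[i]'hi' ∈ D := List.getElem_mem _
  have hup : D[i]'hi' ≤ 1 := by rcases hw.1 _ hmem with h | h <;> omega
  have h1 : 1 ≤ (D.take (i + 1)).sum := hw.2.1 (i + 1) (by omega) (by omega)
  have h2 : (D.take i).sum ≤ (i : ℤ) := by
    have := List.sum_le_card_nsmul (D.take i) 1
      (fun x hx => by rcases hw.1 x (List.take_subset _ _ hx) with h | h <;> omega)
    have hl : (D.take i).length = i := by
      rw [List.length_take]; omega
    rw [hl] at this
    simpa using this
  have h3 := List.sum_take_succ D i hi'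
  constructor
  · have him : (i : ℤ) < (m : ℤ) := by exact_mod_cast hi
    omega
  · exact hup

instance gw_finite (m : ℕ) : Finite {D : List ℤ // D.length = m ∧ IsGameWalk D} := by
  haveI : Finite ↥(Set.Icc (2 - (m : ℤ)) 1) := (Set.finite_Icc _ _).to_subtype
  apply Finite.of_injective
    (f := fun D : {D : List ℤ // D.length = m ∧ IsGameWalk D} =>
      fun i : Fin m => (⟨D.1[i.1]'(by rw [D.2.1]; exact i.2),
        entry_bound D.2.1 D.2.2 i.2⟩ : ↥(Set.Icc (2 - (m : ℤ)) 1)))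
  intro D E h
  apply Subtype.ext
  apply List.ext_get (by rw [D.2.1, E.2.1])
  intro j h1 h2
  have hj : j < m := by rw [← D.2.1]; exact h1
  have := congrFun h ⟨j, hj⟩
  simpa [Subtype.ext_iff] using this

lemma walk_single : IsGameWalk [1] := by
  refine ⟨by simp, ?_, by simp⟩
  intro k h1 h2
  simp only [List.length_singleton] at h2
  have : k = 1 := by omega
  subst this; simp

lemma T_one : T 1 = 1 := by
  have inst1 : Nonempty {D : List ℤ // D.length = 1 ∧ IsGameWalk D} :=
    ⟨⟨[1], by simp, walk_single⟩⟩
  have inst2 : Subsingleton {D : List ℤ // D.length = 1 ∧ IsGameWalk D} := by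
    constructor
    rintro ⟨D, hD, hDw⟩ ⟨E, hE, hEw⟩
    obtain ⟨a, rfl⟩ := List.length_eq_one_iff.mp hD
    obtain ⟨b, rfl⟩ := List.length_eq_one_iff.mp hE
    have ha : a = 1 := by simpa using hDw.2.2
    have hb : b = 1 := by simpa using hEw.2.2
    subst ha hb; rfl
  exact Nat.card_unique

def buildList {n : ℕ} (c : Composition n)
    (w : ∀ i : Fin c.length, {D : List ℤ // D.length = c.blocks.get i ∧ IsGameWalk D}) :
    List ℤ :=
  (List.ofFn fun i => (w i).1).flatten ++ [1 - (c.length : ℤ)]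

lemma buildList_spec {n : ℕ} (c : Composition n) (hc : 4 ≤ c.length)
    (w : ∀ i : Fin c.length, {D : List ℤ // D.length = c.blocks.get i ∧ IsGameWalk D}) :
    (buildList c w).length = n + 1 ∧ IsGameWalk (buildList c w) := by
  set L : List (List ℤ) := List.ofFn fun i => (w i).1 with hL
  have hLwalk : ∀ W ∈ L, IsGameWalk W := by
    intro W hW
    rw [hL, List.mem_ofFn] at hW
    obtain ⟨i, rfl⟩ := hW
    exact (w i).2.2
  have hmap : L.map List.length = c.blocks := by
    rw [hL, List.map_ofFn]
    have : (List.length ∘ fun i => (w i).1) = fun i => c.blocks.get i := by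
      funext i; exact (w i).2.1
    rw [this]
    exact List.ofFn_get c.blocks
  have hLflatlen : L.flatten.length = n := by
    rw [List.length_flatten, hmap, c.blocks_sum]
  have hLsum : L.flatten.sum = (c.length : ℤ) := by
    rw [sum_flatten hLwalk, hL, List.length_ofFn]
  have hsum : (buildList c w).sum = 1 := by
    rw [buildList, ← hL, List.sum_append, hLsum]; simp
  refine ⟨?_, ?_, ?_, hsum⟩
  · rw [buildList, ← hL, List.length_append, hLflatlen]; simp
  · intro d hd
    rw [buildList, ← hL, List.mem_append] at hd
    rcases hd with hd | hd
    · obtain ⟨W, hW, hdW⟩ := List.mem_flatten.mp hd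
      exact (hLwalk W hW).1 d hdW
    · simp only [List.mem_singleton] at hd
      subst hd
      right
      have : (4 : ℤ) ≤ (c.length : ℤ) := by exact_mod_cast hc
      omega
  · intro p hp1 hp2
    rw [buildList, ← hL, List.length_append, hLflatlen] at hp2
    simp only [List.length_singleton] at hp2
    rcases le_or_gt p n with hp | hp
    · rw [buildList, ← hL, List.take_append_of_le_length (by omega : p ≤ L.flatten.length)]
      exact flatten_partial_ge_one hLwalk p hp1 (by omega)
    · have hpn : p = n + 1 := by omega
      subst hpn
      have : (buildList c w).take (n + 1) = buildList c w := by
        apply List.take_of_length_le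
        rw [buildList, ← hL, List.length_append, hLflatlen]; simp
      rw [this, hsum]

end GWaux

namespace GWaux

lemma map_length_eq_blocks {n : ℕ} (c : Composition n)
    (w : ∀ i : Fin c.length, {D : List ℤ // D.length = c.blocks.get i ∧ IsGameWalk D}) :
    (List.ofFn fun i => (w i).1).map List.length = c.blocks := by
  rw [List.map_ofFn]
  have : (List.length ∘ fun i => (w i).1) = fun i => c.blocks.get i := by
    funext i; exact (w i).2.1
  rw [this]
  exact List.ofFn_get c.blocks

lemma main_card (n : ℕ) (hn : 1 ≤ n) :
    T (n + 1) = ∑ c : Composition n,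
      if 4 ≤ c.length then (c.blocks.map T).prod else 0 := by
  classical
  let φ : (Σ c : Composition n, PLift (4 ≤ c.length) ×
        (∀ i : Fin c.length, {D : List ℤ // D.length = c.blocks.get i ∧ IsGameWalk D})) →
      {D : List ℤ // D.length = n + 1 ∧ IsGameWalk D} :=
    fun a => ⟨buildList a.1 a.2.2,
      (buildList_spec a.1 a.2.1.down a.2.2).1, (buildList_spec a.1 a.2.1.down a.2.2).2⟩
  have hinj : Function.Injective φ := by
    rintro ⟨c, hc, w⟩ ⟨c', hc', w'⟩ hab
    have hlists : buildList c w = buildList c' w' := congrArg Subtype.val hab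
    rw [buildList, buildList] at hlists
    obtain ⟨hJ, hlast⟩ := List.append_inj' hlists (by simp)
    have hk : c.length = c'.length := by
      have h1 : (1 : ℤ) - (c.length : ℤ) = 1 - (c'.length : ℤ) := by
        simpa using hlast
      omega
    have hwalks : ∀ W ∈ (List.ofFn fun i => (w i).1), IsGameWalk W := by
      intro W hW
      rw [List.mem_ofFn] at hW
      obtain ⟨i, rfl⟩ := hW
      exact (w i).2.2
    have hwalks' : ∀ W ∈ (List.ofFn fun i => (w' i).1), IsGameWalk W := by
      intro W hW
      rw [List.mem_ofFn] at hW
      obtain ⟨i, rfl⟩ := hW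
      exact (w' i).2.2
    have hLL := decomp_unique _ _ hwalks hwalks' hJ
    have hblocks : c.blocks = c'.blocks := by
      rw [← map_length_eq_blocks c w, ← map_length_eq_blocks c' w', hLL]
    have hcc : c = c' := Composition.ext hblocks
    subst hcc
    have hww : w = w' := by
      have := List.ofFn_inj.mp hLL
      funext i
      exact Subtype.ext (congrFun this i)
    rw [Subsingleton.elim hc hc', hww]
  have hsurj : Function.Surjective φ := by
    rintro ⟨D, hDlen, hDw⟩
    have hne : D ≠ [] := by
      intro e; rw [e] at hDlen; simp at hDlen
    set P := D.dropLast with hPdef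
    set d := D.getLast hne with hddef
    have hsplit : P ++ [d] = D := List.dropLast_append_getLast hne
    have hPlen : P.length = n := by
      rw [hPdef, List.length_dropLast, hDlen]; omega
    have hPsumd : P.sum + d = 1 := by
      have := hDw.2.2
      rw [← hsplit, List.sum_append] at this
      simpa using this
    have hPpartial : ∀ t, 1 ≤ t → t ≤ P.length → 1 ≤ (P.take t).sum := by
      intro t h1 h2
      have := hDw.2.1 t h1 (by rw [hDlen]; omega)
      rwa [← hsplit, List.take_append_of_le_length h2] at this
    have hd3 : d ≤ -3 := by
      rcases hDw.1 d (hsplit ▸ (List.mem_append.mpr (Or.inr (by simp)))) with h | h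
      · exfalso
        have h1 : 1 ≤ (P.take P.length).sum := hPpartial P.length (by omega) le_rfl
        rw [List.take_length] at h1
        omega
      · exact h
    set k := (1 - d).toNat with hkdef
    have hk : (k : ℤ) = 1 - d := Int.toNat_of_nonneg (by omega)
    have hk4 : 4 ≤ k := by omega
    have hPsumk : P.sum = (k : ℤ) := by omega
    obtain ⟨L, hLlen, hLwalk, hLflat⟩ := decomp_exists k (by omega) P
      (fun x hx => hDw.1 x (hsplit ▸ (List.mem_append.mpr (Or.inl hx))))
      hPpartial hPsumk
    have hpos : ∀ i ∈ L.map List.length, 0 < i := by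
      intro i hi
      rw [List.mem_map] at hi
      obtain ⟨W, hW, rfl⟩ := hi
      exact walk_length_pos (hLwalk W hW)
    have hbsum : (L.map List.length).sum = n := by
      rw [← List.length_flatten, hLflat, hPlen]
    set c : Composition n := ⟨L.map List.length, fun {i} hi => hpos i hi, hbsum⟩ with hcdef
    have hclen : c.length = k := by
      show (L.map List.length).length = k
      rw [List.length_map, hLlen]
    have hidx : ∀ i : Fin c.length, i.1 < L.length := by
      intro i
      have h1 := i.2
      have h2 : c.length = k := hclen
      omega
    refine ⟨⟨c, ⟨by rw [hclen]; exact hk4⟩, fun i =>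
      ⟨L[i.1]'(hidx i), ?_, hLwalk _ (List.getElem_mem _)⟩⟩, ?_⟩
    · show (L[i.1]'(hidx i)).length = c.blocks.get i
      show (L[i.1]'(hidx i)).length = (L.map List.length).get ⟨i.1, i.2⟩
      rw [List.get_eq_getElem, List.getElem_map]
    · apply Subtype.ext
      show buildList c _ = D
      rw [buildList]
      have hofn : (List.ofFn fun i : Fin c.length => L[i.1]'(hidx i)) = L := by
        apply List.ext_get
        · rw [List.length_ofFn, hclen, hLlen]
        · intro j h1 h2
          rw [List.get_ofFn]
          rfl
      rw [hofn, hLflat, hclen]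
      have hdk : (1 : ℤ) - (k : ℤ) = d := by omega
      rw [hdk, hsplit]
  have hcard := (Nat.card_eq_of_bijective φ ⟨hinj, hsurj⟩).symm
  have hT : T (n + 1) = Nat.card (Σ c : Composition n, PLift (4 ≤ c.length) ×
      (∀ i : Fin c.length, {D : List ℤ // D.length = c.blocks.get i ∧ IsGameWalk D})) :=
    hcard
  rw [hT]
  haveI : ∀ c : Composition n, Fintype (PLift (4 ≤ c.length) ×
      (∀ i : Fin c.length, {D : List ℤ // D.length = c.blocks.get i ∧ IsGameWalk D})) :=
    fun c => Fintype.ofFinite _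
  rw [Nat.card_eq_fintype_card, Fintype.card_sigma]
  apply Finset.sum_congr rfl
  intro c _
  rw [← Nat.card_eq_fintype_card, Nat.card_prod]
  by_cases h4 : 4 ≤ c.length
  · rw [if_pos h4]
    haveI : Nonempty (PLift (4 ≤ c.length)) := ⟨⟨h4⟩⟩
    rw [Nat.card_unique, one_mul, Nat.card_pi]
    conv_rhs => rw [← List.ofFn_get c.blocks, List.map_ofFn, List.prod_ofFn]
    rfl
  · rw [if_neg h4]
    haveI : IsEmpty (PLift (4 ≤ c.length)) := ⟨fun x => h4 x.down⟩
    rw [Nat.card_of_isEmpty, zero_mul]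

end GWaux

/-- `T 1 = 1`, and for `m ≥ 2`, `T m` is the sum, over all `k ≥ 4` and all
compositions `(m₁, …, m_k)` of `m - 1` into `k` positive parts, of the products
`T m₁ ⋯ T m_k`. -/
theorem gameWalk_count_recurrence :
    T 1 = 1 ∧ ∀ m, 2 ≤ m →
      T m = ∑ c : Composition (m - 1),
        if 4 ≤ c.length then (c.blocks.map T).prod else 0 := by
  refine ⟨GWaux.T_one, ?_⟩
  intro m hm
  obtain ⟨n, rfl⟩ : ∃ n, m = n + 1 := ⟨m - 1, by omega⟩
  have hn : 1 ≤ n := by omega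
  simpa using GWaux.main_card n hn
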